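/- Let (L₁, …, L_h; w₁, …, w_h) be a vertex hierarchy of height h on the weighted graph G = (V, w₁). Then for all s, t ∈ V: dist_G(s,t) = ⨅_{x ∈ Anc(s) ∩ Anc(t)} ( d(s,x) + d(t,x) ), where the infimum in ℕ∞ over the empty set is ⊤. -/

import Mathlib

namespace ISLabel

variable {V : Type*}

/-- Two vertices are adjacent in the weighted graph `w` when they are distinct and
joined by an edge of finite weight. -/
def Adj (w : V → V → ℕ∞) (u v : V) : Prop := u ≠ v ∧ w u v < ⊤

/-- `p` is a walk from `u` to `v` in the weighted graph `w`: a nonempty list of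
vertices starting at `u`, ending at `v`, with consecutive vertices adjacent. -/
def IsWalk (w : V → V → ℕ∞) (u v : V) (p : List V) : Prop :=
  p ≠ [] ∧ p.head? = some u ∧ p.getLast? = some v ∧ p.Chain' (Adj w)

/-- The length of a list of vertices: the sum of `f` over consecutive pairs. -/
def pathLen (f : V → V → ℕ∞) (p : List V) : ℕ∞ :=
  ((p.zip p.tail).map fun e => f e.1 e.2).sum

/-- The distance from `u` to `v` in `w`: the infimum of the lengths of all walks
from `u` to `v` (`⊤` if there is no such walk). -/
noncomputable def wdist (w : V → V → ℕ∞) (u v : V) : ℕ∞ :=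
  ⨅ p : {p : List V // IsWalk w u v p}, pathLen w p.1

/-- `I` is an independent set in `w`. -/
def IsIndep (w : V → V → ℕ∞) (I : Set V) : Prop :=
  ∀ u ∈ I, ∀ v ∈ I, ¬ Adj w u v

/-- `w` is a weighted undirected graph: symmetric, and every off-diagonal value is
either `⊤` (no edge) or a weight `≥ 1`. -/
def IsWGraph (w : V → V → ℕ∞) : Prop :=
  (∀ u v, w u v = w v u) ∧ ∀ u v, u ≠ v → 1 ≤ w u v

/-- `w` is supported on `S`: all weights touching a vertex outside `S` are `⊤`. -/
def SupportedOn (w : V → V → ℕ∞) (S : Set V) : Prop :=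
  ∀ u v, u ∉ S ∨ v ∉ S → w u v = ⊤

/-- `VsetOf L i` is the vertex set `V_i = V ∖ (L₁ ∪ … ∪ L_{i-1})`. -/
def VsetOf (L : ℕ → Set V) (i : ℕ) : Set V := {v | ∀ j, 1 ≤ j → j < i → v ∉ L j}

/-- A vertex hierarchy of height `h ≥ 1` on the weighted graph `w 1`:
pairwise disjoint independent levels `L 1, …, L h` covering `V`, and graphs
`w i` supported on `V_i` obtained by the augmenting-edge construction. -/
structure VertexHierarchy (V : Type*) (h : ℕ) where
  L : ℕ → Set V
  w : ℕ → V → V → ℕ∞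
  h_pos : 1 ≤ h
  wgraph : ∀ i, 1 ≤ i → i ≤ h → IsWGraph (w i)
  disj : ∀ i j, 1 ≤ i → i ≤ h → 1 ≤ j → j ≤ h → i ≠ j → ∀ v, v ∈ L i → v ∉ L j
  cover : ∀ v : V, ∃ i, 1 ≤ i ∧ i ≤ h ∧ v ∈ L i
  supported : ∀ i, 1 ≤ i → i ≤ h → SupportedOn (w i) (VsetOf L i)
  aug : ∀ i, 2 ≤ i → i ≤ h → ∀ u v : V, u ≠ v → u ∈ VsetOf L i → v ∈ VsetOf L i →
    w i u v = min (w (i - 1) u v) (⨅ x ∈ L (i - 1), w (i - 1) u x + w (i - 1) x v)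
  indep : ∀ i, 1 ≤ i → i ≤ h → IsIndep (w i) (L i)

/-- The level `ℓ(v)`: the unique `i` with `1 ≤ i ≤ h` and `v ∈ L i`. -/
noncomputable def level {h : ℕ} (H : VertexHierarchy V h) (v : V) : ℕ :=
  sInf {i | 1 ≤ i ∧ i ≤ h ∧ v ∈ H.L i}

/-- One step of an ascending sequence: go to a strictly higher-level vertex that is
adjacent in the graph at the current vertex's level. -/
def AscStep {h : ℕ} (H : VertexHierarchy V h) (a b : V) : Prop :=
  level H a < level H b ∧ Adj (H.w (level H a)) a b

/-- `p` is an ascending sequence from `v` to `u`. -/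
def IsAscending {h : ℕ} (H : VertexHierarchy V h) (v u : V) (p : List V) : Prop :=
  p ≠ [] ∧ p.head? = some v ∧ p.getLast? = some u ∧ p.Chain' (AscStep H)

/-- The set of ancestors of `v`. -/
def Anc {h : ℕ} (H : VertexHierarchy V h) (v : V) : Set V :=
  {u | ∃ p, IsAscending H v u p}

/-- `d(v,u)`: the infimum of the lengths of ascending sequences from `v` to `u`,
where each step `a → b` costs `w (ℓ(a)) a b`; `⊤` if `u` is not an ancestor of `v`. -/
noncomputable def ancDist {h : ℕ} (H : VertexHierarchy V h) (v u : V) : ℕ∞ :=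
  ⨅ p : {p : List V // IsAscending H v u p},
    pathLen (fun a b => H.w (level H a) a b) p.1

lemma enat_exists_eq_iInf {ι : Sort*} [Nonempty ι] (f : ι → ℕ∞) : ∃ i, f i = ⨅ j, f j := by
  obtain ⟨a, ⟨i, rfl⟩, ha⟩ := (wellFounded_lt (α := ℕ∞)).has_min (Set.range f) (Set.range_nonempty f)
  exact ⟨i, le_antisymm (le_iInf fun j => not_lt.1 (ha _ ⟨j, rfl⟩)) (iInf_le f i)⟩

@[simp] lemma pathLen_nil (f : V → V → ℕ∞) : pathLen f ([] : List V) = 0 := rfl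
@[simp] lemma pathLen_singleton (f : V → V → ℕ∞) (a : V) : pathLen f [a] = 0 := rfl
@[simp] lemma pathLen_cons_cons (f : V → V → ℕ∞) (a b : V) (l : List V) :
    pathLen f (a :: b :: l) = f a b + pathLen f (b :: l) := rfl

lemma pathLen_append_cons (f : V → V → ℕ∞) (xs : List V) (y : V) (ys : List V) :
    pathLen f (xs ++ y :: ys) = pathLen f (xs ++ [y]) + pathLen f (y :: ys) := by
  induction xs with
  | nil => simp
  | cons x xs ih =>
    cases xs with
    | nil => simp [pathLen_cons_cons]
    | cons x' xs' =>
      simp only [List.cons_append, pathLen_cons_cons] at *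
      rw [ih, add_assoc]

lemma pathLen_concat (f : V → V → ℕ∞) (xs : List V) (a y : V) (h : xs.getLast? = some a) :
    pathLen f (xs ++ [y]) = pathLen f xs + f a y := by
  induction xs with
  | nil => simp at h
  | cons x xs ih =>
    cases xs with
    | nil => simp at h; subst h; simp [add_comm]
    | cons x' xs' =>
      rw [List.getLast?_cons_cons] at h
      simp only [List.cons_append, pathLen_cons_cons]
      rw [show x' :: (xs' ++ [y]) = (x' :: xs') ++ [y] from rfl, ih h, add_assoc]

lemma pathLen_congr {f g : V → V → ℕ∞} {R : V → V → Prop} (hfg : ∀ a b, R a b → f a b = g a b) :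
    ∀ l : List V, l.Chain' R → pathLen f l = pathLen g l := by
  intro l
  induction l with
  | nil => simp
  | cons a l ih =>
    cases l with
    | nil => simp
    | cons b l' =>
      intro hc
      rw [List.Chain', List.isChain_cons_cons] at hc
      simp [hfg a b hc.1, ih hc.2]

lemma pathLen_le {f g : V → V → ℕ∞} {R : V → V → Prop} (hfg : ∀ a b, R a b → f a b ≤ g a b) :
    ∀ l : List V, l.Chain' R → pathLen f l ≤ pathLen g l := by
  intro l
  induction l with
  | nil => simp
  | cons a l ih =>
    cases l with
    | nil => simp
    | cons b l' =>
      intro hc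
      rw [List.Chain', List.isChain_cons_cons] at hc
      simp only [pathLen_cons_cons]
      exact add_le_add (hfg a b hc.1) (ih hc.2)

lemma pathLen_reverse (f : V → V → ℕ∞) (l : List V) :
    pathLen f l.reverse = pathLen (fun a b => f b a) l := by
  induction l with
  | nil => simp
  | cons a l ih =>
    cases l with
    | nil => simp
    | cons b l' =>
      have : (a :: b :: l').reverse = (b :: l').reverse ++ [a] := by simp
      rw [this, pathLen_concat f _ b a (by simp), ih]
      simp [add_comm]


lemma wdist_le_pathLen {w : V → V → ℕ∞} {u v : V} {p : List V} (hp : IsWalk w u v p) :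
    wdist w u v ≤ pathLen w p := iInf_le (fun q : {p : List V // IsWalk w u v p} => pathLen w q.1) ⟨p, hp⟩

lemma isWalk_single (w : V → V → ℕ∞) (v : V) : IsWalk w v v [v] := by
  refine ⟨by simp, by simp, by simp, by simp [List.Chain']⟩

lemma wdist_self (w : V → V → ℕ∞) (v : V) : wdist w v v = 0 :=
  le_antisymm (le_of_le_of_eq (wdist_le_pathLen (isWalk_single w v)) (by simp)) zero_le

lemma wdist_le_weight (w : V → V → ℕ∞) (u v : V) : wdist w u v ≤ w u v := by
  rcases eq_or_ne u v with rfl | huv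
  · simp [wdist_self]
  rcases eq_or_lt_of_le (le_top : w u v ≤ ⊤) with heq | hlt
  · simp [heq]
  · have hw : IsWalk w u v [u, v] := ⟨by simp, by simp, by simp, by simp [List.Chain', Adj, huv, hlt]⟩
    calc wdist w u v ≤ pathLen w [u, v] := wdist_le_pathLen hw
    _ = w u v := by simp

lemma IsWalk.comp {w : V → V → ℕ∞} {u m v : V} {p q : List V}
    (hp : IsWalk w u m p) (hq : IsWalk w m v q) :
    IsWalk w u v (p ++ q.tail) ∧ pathLen w (p ++ q.tail) = pathLen w p + pathLen w q := by
  obtain ⟨hpne, hph, hpl, hpc⟩ := hp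
  obtain ⟨hqne, hqh, hql, hqc⟩ := hq
  obtain ⟨t, rfl⟩ : ∃ t, q = m :: t := by
    cases q with | nil => simp at hqne | cons x t => simp at hqh; exact ⟨t, by rw [hqh]⟩
  cases t with
  | nil =>
    simp only [List.tail_cons, List.append_nil]
    have : m = v := by simpa using hql
    subst this
    exact ⟨⟨hpne, hph, hpl, hpc⟩, by simp⟩
  | cons c t' =>
    have hadj : Adj w m c := (List.isChain_cons_cons.1 hqc).1
    constructor
    · refine ⟨by simp [hpne], ?_, ?_, ?_⟩
      · rw [List.head?_append_of_ne_nil _ hpne] <;> try exact hph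
      · rw [show p ++ (m :: c :: t').tail = p ++ c :: t' from rfl,
          List.getLast?_append_cons]
        simpa using hql
      · rw [List.Chain', List.isChain_append]
        refine ⟨hpc, (List.isChain_cons_cons.1 hqc).2, ?_⟩
        intro x hx y hy
        rw [hpl] at hx
        simp at hx hy
        subst hx; subst hy; exact hadj
    · rw [show p ++ (m :: c :: t').tail = p ++ c :: t' from rfl,
        pathLen_append_cons, pathLen_concat w p m c hpl, pathLen_cons_cons, add_assoc]

lemma wdist_triangle (w : V → V → ℕ∞) (u m v : V) :
    wdist w u v ≤ wdist w u m + wdist w m v := by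
  by_cases h1 : IsEmpty {p : List V // IsWalk w u m p}
  · have : wdist w u m = ⊤ := by rw [wdist, iInf_of_empty]
    simp [this]
  by_cases h2 : IsEmpty {p : List V // IsWalk w m v p}
  · have : wdist w m v = ⊤ := by rw [wdist, iInf_of_empty]
    simp [this]
  rw [not_isEmpty_iff] at h1 h2
  obtain ⟨⟨p, hp⟩, hpm⟩ := enat_exists_eq_iInf (fun q : {p : List V // IsWalk w u m p} => pathLen w q.1)
  obtain ⟨⟨q, hq⟩, hqm⟩ := enat_exists_eq_iInf (fun q : {p : List V // IsWalk w m v p} => pathLen w q.1)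
  obtain ⟨hw, hlen⟩ := hp.comp hq
  calc wdist w u v ≤ pathLen w (p ++ q.tail) := wdist_le_pathLen hw
  _ = pathLen w p + pathLen w q := hlen
  _ = wdist w u m + wdist w m v := by rw [wdist, wdist, ← hpm, ← hqm]

lemma wdist_symm {w : V → V → ℕ∞} (hsymm : ∀ a b, w a b = w b a) (u v : V) :
    wdist w u v = wdist w v u := by
  have key : ∀ a b : V, wdist w a b ≤ wdist w b a := by
    intro a b
    refine le_iInf fun ⟨p, hpne, hph, hpl, hpc⟩ => ?_
    have hw : IsWalk w a b p.reverse := by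
      refine ⟨by simp [hpne], by simpa using hpl, by simpa using hph, ?_⟩
      rw [List.Chain', List.isChain_reverse]
      exact hpc.imp fun {x y} hxy => ⟨hxy.1.symm, (hsymm y x) ▸ hxy.2⟩
    calc wdist w a b ≤ pathLen w p.reverse := wdist_le_pathLen hw
    _ = pathLen (fun x y => w y x) p := pathLen_reverse w p
    _ = pathLen w p := by
        rw [pathLen, pathLen]
        congr 1
        exact List.map_congr_left fun e _ => hsymm e.2 e.1
  exact le_antisymm (key u v) (key v u)

lemma wdist_le_pathLen_of_chain {w : V → V → ℕ∞} {f : V → V → ℕ∞} {R : V → V → Prop}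
    (hf : ∀ a b, R a b → wdist w a b ≤ f a b) :
    ∀ l : List V, ∀ u v : V, l.head? = some u → l.getLast? = some v → l.Chain' R →
      wdist w u v ≤ pathLen f l := by
  intro l
  induction l with
  | nil => intro u v h; simp at h
  | cons a l ih =>
    intro u v hh hl hc
    cases l with
    | nil =>
      simp at hh hl
      subst hh; subst hl
      simp [wdist_self]
    | cons b l' =>
      obtain rfl : u = a := by rw [List.head?_cons, Option.some_inj] at hh; exact hh.symm
      rw [List.getLast?_cons_cons] at hl
      rw [List.Chain', List.isChain_cons_cons] at hc
      calc wdist w u v ≤ wdist w u b + wdist w b v := wdist_triangle w u b v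
      _ ≤ f u b + pathLen f (b :: l') := add_le_add (hf u b hc.1) (ih b v rfl hl hc.2)
      _ = pathLen f (u :: b :: l') := by simp


section Hier
variable {h : ℕ} (H : VertexHierarchy V h)

lemma level_spec (v : V) :
    1 ≤ level H v ∧ level H v ≤ h ∧ v ∈ H.L (level H v) := by
  have hne : {i | 1 ≤ i ∧ i ≤ h ∧ v ∈ H.L i}.Nonempty := by
    obtain ⟨i, h1, h2, h3⟩ := H.cover v; exact ⟨i, h1, h2, h3⟩
  exact Nat.sInf_mem hne

lemma level_eq {v : V} {i : ℕ} (hm : v ∈ H.L i) (h1 : 1 ≤ i) (h2 : i ≤ h) :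
    level H v = i := by
  by_contra hne
  exact H.disj _ _ (level_spec H v).1 (level_spec H v).2.1 h1 h2 hne v (level_spec H v).2.2 hm

lemma mem_vset {v : V} {i : ℕ} (hi : i ≤ level H v) : v ∈ VsetOf H.L i := by
  intro j hj1 hji hmem
  have hjh : j ≤ h := le_trans (le_of_lt (lt_of_lt_of_le hji hi)) (level_spec H v).2.1
  have := level_eq H hmem hj1 hjh
  omega

lemma vset_le_level {v : V} {i : ℕ} (hv : v ∈ VsetOf H.L i) : i ≤ level H v := by
  by_contra hlt
  push_neg at hlt
  exact hv (level H v) (level_spec H v).1 hlt (level_spec H v).2.2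

lemma w_mono {i j : ℕ} (h1 : 1 ≤ i) (hij : i ≤ j) (hjh : j ≤ h) {u v : V} (huv : u ≠ v)
    (hu : j ≤ level H u) (hv : j ≤ level H v) : H.w j u v ≤ H.w i u v := by
  induction j, hij using Nat.le_induction with
  | base => exact le_refl _
  | succ j hij ih =>
    have key := H.aug (j + 1) (by omega) hjh u v huv (mem_vset H hu) (mem_vset H hv)
    simp only [Nat.add_sub_cancel] at key
    rw [key]
    exact le_trans (min_le_left _ _) (ih (by omega) (by omega) (by omega))

/-- weight at the lower endpoint's level. -/
noncomputable def mw (a b : V) : ℕ∞ := H.w (min (level H a) (level H b)) a b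

/-- adjacency at the lower endpoint's level. -/
def MAdj (a b : V) : Prop := Adj (H.w (min (level H a) (level H b))) a b

lemma mw_symm (a b : V) : mw H a b = mw H b a := by
  rw [mw, mw, min_comm (level H b)]
  exact (H.wgraph _ (le_min (level_spec H a).1 (level_spec H b).1)
    (le_trans (min_le_left _ _) (level_spec H a).2.1)).1 a b

lemma madj_symm {a b : V} (hab : MAdj H a b) : MAdj H b a :=
  ⟨hab.1.symm, by rw [← mw, ← mw_symm]; exact hab.2⟩

lemma madj_level_ne {a b : V} (hab : MAdj H a b) : level H a ≠ level H b := by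
  intro heq
  have hmin : min (level H a) (level H b) = level H a := by rw [heq, min_self]
  rw [MAdj, hmin] at hab
  exact H.indep (level H a) (level_spec H a).1 (level_spec H a).2.1 a (level_spec H a).2.2 b
    (by rw [heq]; exact (level_spec H b).2.2) hab

lemma madj_of_adj_one {a b : V} (hab : Adj (H.w 1) a b) :
    MAdj H a b ∧ mw H a b ≤ H.w 1 a b := by
  have hle : H.w (min (level H a) (level H b)) a b ≤ H.w 1 a b :=
    w_mono H (le_refl 1) (le_min (level_spec H a).1 (level_spec H b).1)
      (le_trans (min_le_left _ _) (level_spec H a).2.1) hab.1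
      (min_le_left _ _) (min_le_right _ _)
  exact ⟨⟨hab.1, lt_of_le_of_lt hle hab.2⟩, hle⟩

lemma valley_shortcut {a m c : V} (hma : MAdj H m a) (hmc : MAdj H m c)
    (hla : level H m < level H a) (hlc : level H m < level H c) (hac : a ≠ c) :
    MAdj H a c ∧ mw H a c ≤ mw H m a + mw H m c := by
  set i := level H m with hi
  have hia : min (level H m) (level H a) = i := min_eq_left hla.le
  have hic : min (level H m) (level H c) = i := min_eq_left hlc.le
  have hih : i + 1 ≤ h := le_trans hla (level_spec H a).2.1
  have key := H.aug (i + 1) (by have := (level_spec H m).1; omega) hih a c hac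
    (mem_vset H hla) (mem_vset H hlc)
  simp only [Nat.add_sub_cancel] at key
  have h1 : H.w (i + 1) a c ≤ H.w i a m + H.w i m c := by
    rw [key]
    refine le_trans (min_le_right _ _) (le_trans (iInf₂_le m (level_spec H m).2.2) ?_)
    rw [(H.wgraph i (level_spec H m).1 (le_trans (by omega) hih)).1 a m]
  have h2 : mw H a c ≤ H.w (i + 1) a c :=
    w_mono H (by omega) (le_min (le_trans (by omega) hla) (le_trans (by omega) hlc))
      (le_trans (min_le_left _ _) (level_spec H a).2.1) hac (min_le_left _ _) (min_le_right _ _)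
  have hfin : H.w i a m + H.w i m c < ⊤ := by
    have hx := hma.2; have hy := hmc.2
    rw [hia] at hx; rw [hic] at hy
    rw [(H.wgraph i (level_spec H m).1 (le_trans (by omega) hih)).1 a m]
    exact WithTop.add_lt_top.2 ⟨hx, hy⟩
  refine ⟨⟨hac, lt_of_le_of_lt (le_trans h2 h1) hfin⟩, ?_⟩
  calc mw H a c ≤ H.w i a m + H.w i m c := le_trans h2 h1
  _ = mw H m a + mw H m c := by
      rw [mw, mw, hia, hic, (H.wgraph i (level_spec H m).1 (le_trans (by omega) hih)).1 a m]

lemma ascStep_of_madj {a b : V} (hm : MAdj H a b) (hl : level H a < level H b) :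
    AscStep H a b ∧ H.w (level H a) a b = mw H a b := by
  have : min (level H a) (level H b) = level H a := min_eq_left hl.le
  exact ⟨⟨hl, by rwa [← this]⟩, by rw [mw, this]⟩

end Hier



section Anc
variable {h : ℕ} (H : VertexHierarchy V h)

lemma isAscending_single (v : V) : IsAscending H v v [v] :=
  ⟨by simp, by simp, by simp, by simp [List.Chain']⟩

lemma anc_self (v : V) : v ∈ Anc H v := ⟨[v], isAscending_single H v⟩

lemma ancDist_le_pathLen {v x : V} {p : List V} (hp : IsAscending H v x p) :
    ancDist H v x ≤ pathLen (fun a b => H.w (level H a) a b) p :=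
  iInf_le (fun q : {p : List V // IsAscending H v x p} =>
    pathLen (fun a b => H.w (level H a) a b) q.1) ⟨p, hp⟩

lemma ancDist_self_le (v : V) : ancDist H v v ≤ 0 := by
  have := ancDist_le_pathLen H (isAscending_single H v)
  simpa using this

lemma ancDist_exists {v x : V} (hx : x ∈ Anc H v) :
    ∃ p, IsAscending H v x p ∧
      pathLen (fun a b => H.w (level H a) a b) p = ancDist H v x := by
  have : Nonempty {p // IsAscending H v x p} := ⟨⟨hx.choose, hx.choose_spec⟩⟩
  obtain ⟨⟨p, hp⟩, heq⟩ := enat_exists_eq_iInf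
    (fun q : {p // IsAscending H v x p} => pathLen (fun a b => H.w (level H a) a b) q.1)
  exact ⟨p, hp, heq⟩

lemma anc_prepend {u b x : V} (hstep : AscStep H u b) (hx : x ∈ Anc H b) :
    x ∈ Anc H u ∧ ancDist H u x ≤ H.w (level H u) u b + ancDist H b x := by
  obtain ⟨p, hp, heq⟩ := ancDist_exists H hx
  obtain ⟨t, rfl⟩ : ∃ t, p = b :: t := by
    cases p with
    | nil => exact absurd rfl hp.1
    | cons y t => exact ⟨t, by rw [show y = b by simpa using hp.2.1]⟩
  have hasc : IsAscending H u x (u :: b :: t) := by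
    refine ⟨by simp, by simp, ?_, List.isChain_cons_cons.2 ⟨hstep, hp.2.2.2⟩⟩
    rw [List.getLast?_cons_cons]
    exact hp.2.2.1
  refine ⟨⟨_, hasc⟩, ?_⟩
  calc ancDist H u x ≤ pathLen (fun a b => H.w (level H a) a b) (u :: b :: t) :=
        ancDist_le_pathLen H hasc
  _ = H.w (level H u) u b + pathLen (fun a b => H.w (level H a) a b) (b :: t) := by simp
  _ = H.w (level H u) u b + ancDist H b x := by rw [heq]

/-- the label-distance objective. -/
noncomputable def DD (u v : V) : ℕ∞ :=
  ⨅ x ∈ Anc H u ∩ Anc H v, (ancDist H u x + ancDist H v x)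

lemma DD_le {u v x : V} (hx : x ∈ Anc H u ∩ Anc H v) :
    DD H u v ≤ ancDist H u x + ancDist H v x := iInf₂_le x hx

lemma DD_symm (u v : V) : DD H u v = DD H v u := by
  rw [DD, DD, Set.inter_comm]
  exact iInf_congr fun x => iInf_congr fun _ => add_comm _ _

lemma DD_self_le_zero (v : V) : DD H v v ≤ 0 := by
  have := DD_le H (u := v) (v := v) (x := v) ⟨anc_self H v, anc_self H v⟩
  exact le_trans this (by simpa using add_le_add (ancDist_self_le H v) (ancDist_self_le H v))

lemma DD_prepend {u b v : V} (hstep : AscStep H u b) :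
    DD H u v ≤ H.w (level H u) u b + DD H b v := by
  rcases (Anc H b ∩ Anc H v).eq_empty_or_nonempty with hemp | hne
  · have : DD H b v = ⊤ := by rw [DD, hemp]; simp
    rw [this, add_top]; exact le_top
  · have hnem : Nonempty ↥(Anc H b ∩ Anc H v) := hne.to_subtype
    have hDD : DD H b v = ⨅ x : ↥(Anc H b ∩ Anc H v), (ancDist H b x + ancDist H v x) := by
      rw [DD, iInf_subtype']
    obtain ⟨⟨x, hx⟩, heq⟩ := enat_exists_eq_iInf
      (fun x : ↥(Anc H b ∩ Anc H v) => ancDist H b x + ancDist H v x)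
    obtain ⟨hanc, hle⟩ := anc_prepend H hstep hx.1
    calc DD H u v ≤ ancDist H u x + ancDist H v x := DD_le H ⟨hanc, hx.2⟩
    _ ≤ (H.w (level H u) u b + ancDist H b x) + ancDist H v x := add_le_add_left hle _
    _ = H.w (level H u) u b + (ancDist H b x + ancDist H v x) := add_assoc _ _ _
    _ = H.w (level H u) u b + DD H b v := by rw [hDD, ← heq]

end Anc



section Main
variable {h : ℕ} (H : VertexHierarchy V h)

lemma head?_append_cons_eq {α : Type*} (xs : List α) (y : α) (ys ys' : List α) :
    (xs ++ y :: ys).head? = (xs ++ y :: ys').head? := by cases xs <;> simp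

lemma pathLen_flip_eq {f : V → V → ℕ∞} (hsymm : ∀ a b, f a b = f b a) (l : List V) :
    pathLen (fun a b => f b a) l = pathLen f l :=
  congrArg List.sum (List.map_congr_left fun e _ => (hsymm e.1 e.2).symm)

lemma pathLen_mw_reverse (l : List V) : pathLen (mw H) l.reverse = pathLen (mw H) l := by
  rw [pathLen_reverse]
  exact pathLen_flip_eq (mw_symm H) l

lemma list_exists_min_image {α β : Type*} [LinearOrder β] (f : α → β) :
    ∀ l : List α, l ≠ [] → ∃ b ∈ l, ∀ x ∈ l, f b ≤ f x := by
  intro l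
  induction l with
  | nil => intro hc; exact absurd rfl hc
  | cons a t ih =>
    intro _
    cases t with
    | nil => exact ⟨a, by simp, by simp⟩
    | cons x t' =>
      obtain ⟨b, hb, hmin⟩ := ih (by simp)
      rcases le_total (f a) (f b) with hab | hab
      · exact ⟨a, by simp, by
          intro y hy
          rcases List.mem_cons.1 hy with rfl | hy
          · exact le_refl _
          · exact le_trans hab (hmin y hy)⟩
      · exact ⟨b, List.mem_cons_of_mem a hb, by
          intro y hy
          rcases List.mem_cons.1 hy with rfl | hy
          · exact hab
          · exact hmin y hy⟩

lemma main_down : ∀ n : ℕ, ∀ l : List V, l.length ≤ n → l.Chain' (MAdj H) →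
    ∀ u v : V, l.head? = some u → l.getLast? = some v → DD H u v ≤ pathLen (mw H) l := by
  intro n
  induction n with
  | zero =>
    intro l hlen _ u v hh _
    have : l = [] := List.length_eq_zero_iff.1 (le_antisymm hlen zero_le)
    subst this; simp at hh
  | succ n ih =>
    intro l hlen hchain u v hh hl
    cases l with
    | nil => simp at hh
    | cons a t =>
      cases t with
      | nil =>
        obtain rfl : u = a := by simpa using hh.symm
        obtain rfl : u = v := by simpa using hl
        simpa using DD_self_le_zero H u
      | cons b t' =>
        obtain ⟨m, hmmem, hmmin⟩ := list_exists_min_image (level H) (a :: b :: t')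
          (by simp)
        obtain ⟨p, q, hpq⟩ := List.append_of_mem hmmem
        rcases eq_or_ne p [] with hpnil | hpne
        · -- minimum at the head: ascend
          subst hpnil
          simp only [List.nil_append] at hpq
          have hpq' := hpq
          rw [List.cons.injEq] at hpq'
          obtain rfl : a = m := hpq'.1
          obtain rfl : b :: t' = q := hpq'.2
          obtain rfl : u = a := by simpa using hh.symm
          have hmb : MAdj H u b := (List.isChain_cons_cons.1 hchain).1
          have hlt : level H u < level H b :=
            lt_of_le_of_ne (hmmin b (by simp)) (madj_level_ne H hmb)
          obtain ⟨hstep, hwe⟩ := ascStep_of_madj H hmb hlt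
          have hrec := ih (b :: t') (by simp at hlen ⊢; omega)
            (List.isChain_cons_cons.1 hchain).2 b v rfl (by rw [← hl, List.getLast?_cons_cons])
          calc DD H u v ≤ H.w (level H u) u b + DD H b v := DD_prepend H hstep
          _ = mw H u b + DD H b v := by rw [hwe]
          _ ≤ mw H u b + pathLen (mw H) (b :: t') := add_le_add_right hrec _
          _ = pathLen (mw H) (u :: b :: t') := (pathLen_cons_cons _ _ _ _).symm
        rcases eq_or_ne q [] with hqnil | hqne
        · -- minimum at the tail: reverse and ascend
          subst hqnil
          obtain rfl : v = m := by
            rw [hpq, List.getLast?_concat] at hl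
            simpa using hl.symm
          have hrev : (a :: b :: t').reverse = v :: p.reverse := by rw [hpq]; simp
          obtain ⟨c, q'', hcq⟩ : ∃ c q'', p.reverse = c :: q'' := by
            cases hp : p.reverse with
            | nil => exact absurd (by simpa using hp) hpne
            | cons c q'' => exact ⟨c, q'', rfl⟩
          have hchainr : (a :: b :: t').reverse.Chain' (MAdj H) :=
            List.isChain_reverse.2 (hchain.imp fun _ _ hxy => madj_symm H hxy)
          rw [hrev, hcq] at hchainr
          have hmc : MAdj H v c := (List.isChain_cons_cons.1 hchainr).1
          have hcl : c ∈ (a :: b :: t') := by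
            have : c ∈ p := by rw [← List.mem_reverse, hcq]; simp
            rw [hpq]; exact List.mem_append_left _ this
          have hlt : level H v < level H c :=
            lt_of_le_of_ne (hmmin c hcl) (madj_level_ne H hmc)
          obtain ⟨hstep, hwe⟩ := ascStep_of_madj H hmc hlt
          have hlenr : (c :: q'').length ≤ n := by
            have h1 : (a :: b :: t').length = p.length + 1 := by rw [hpq]; simp
            have h2 : (c :: q'').length = p.length := by
              rw [← hcq]; simp
            omega
          have hlast : (c :: q'').getLast? = some u := by
            have : (a :: b :: t').reverse.getLast? = some u := by
              rw [List.getLast?_reverse]; exact hh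
            rw [hrev, hcq, List.getLast?_cons_cons] at this
            exact this
          have hrec := ih (c :: q'') hlenr (List.isChain_cons_cons.1 hchainr).2 c u rfl hlast
          calc DD H u v = DD H v u := DD_symm H u v
          _ ≤ H.w (level H v) v c + DD H c u := DD_prepend H hstep
          _ = mw H v c + DD H c u := by rw [hwe]
          _ ≤ mw H v c + pathLen (mw H) (c :: q'') := add_le_add_right hrec _
          _ = pathLen (mw H) (v :: c :: q'') := (pathLen_cons_cons _ _ _ _).symm
          _ = pathLen (mw H) (a :: b :: t').reverse := by rw [hrev, hcq]
          _ = pathLen (mw H) (a :: b :: t') := pathLen_mw_reverse H _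
        · -- internal minimum: surgery at the valley
          obtain ⟨a', ha'⟩ : ∃ a', p.getLast? = some a' := by
            cases hp : p.getLast? with
            | none => exact absurd (List.getLast?_eq_none_iff.1 hp) hpne
            | some a' => exact ⟨a', rfl⟩
          obtain ⟨c, q', rfl⟩ : ∃ c q', q = c :: q' := by
            cases q with
            | nil => exact absurd rfl hqne
            | cons c q' => exact ⟨c, q', rfl⟩
          have hpsplit : p = p.dropLast ++ [a'] := by
            conv_lhs => rw [← List.dropLast_append_getLast hpne]
            rw [List.getLast?_eq_getLast hpne, Option.some_inj] at ha'
            rw [ha']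
          set p' := p.dropLast with hp'
          have hlsplit : (a :: b :: t') = p' ++ a' :: m :: c :: q' := by
            rw [hpq, hpsplit]; simp
          have hchain2 : (p' ++ a' :: m :: c :: q').Chain' (MAdj H) := hlsplit ▸ hchain
          rw [List.Chain', List.isChain_append] at hchain2
          obtain ⟨hcp, hctail, hjun⟩ := hchain2
          have hma' : MAdj H a' m := (List.isChain_cons_cons.1 hctail).1
          have hmc : MAdj H m c := (List.isChain_cons_cons.1 (List.isChain_cons_cons.1 hctail).2).1
          have hcq' : (c :: q').Chain' (MAdj H) := (List.isChain_cons_cons.1 (List.isChain_cons_cons.1 hctail).2).2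
          have ha'mem : a' ∈ (a :: b :: t') := by
            rw [hlsplit]; exact List.mem_append_right _ (by simp)
          have hcmem : c ∈ (a :: b :: t') := by
            rw [hlsplit]; exact List.mem_append_right _ (by simp)
          have hla : level H m < level H a' :=
            lt_of_le_of_ne (hmmin a' ha'mem) (Ne.symm (madj_level_ne H hma'))
          have hlc : level H m < level H c :=
            lt_of_le_of_ne (hmmin c hcmem) (madj_level_ne H hmc)
          -- pathLen decomposition of the old list
          have hold : pathLen (mw H) (a :: b :: t') =
              pathLen (mw H) (p' ++ [a']) + (mw H a' m + (mw H m c + pathLen (mw H) (c :: q'))) := by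
            rw [hlsplit, pathLen_append_cons, pathLen_cons_cons, pathLen_cons_cons]
          rcases eq_or_ne a' c with rfl | hac
          · -- a' = c : drop the detour
            have hchain3 : (p' ++ a' :: q').Chain' (MAdj H) := by
              rw [List.Chain', List.isChain_append]
              exact ⟨hcp, hcq', fun x hx y hy => hjun x hx y (by simpa using hy)⟩
            have hh3 : (p' ++ a' :: q').head? = some u := by
              rw [head?_append_cons_eq p' a' q' (m :: a' :: q'), ← hlsplit]; exact hh
            have hl3 : (p' ++ a' :: q').getLast? = some v := by
              rw [List.getLast?_append_cons]
              rw [hlsplit, List.getLast?_append_cons, List.getLast?_cons_cons,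
                List.getLast?_cons_cons] at hl
              exact hl
            have hlen3 : (p' ++ a' :: q').length ≤ n := by
              have h1 : (a :: b :: t').length = p'.length + 3 + q'.length := by
                rw [hlsplit]; simp <;> omega
              have h2 : (p' ++ a' :: q').length = p'.length + 1 + q'.length := by
                simp <;> omega
              omega
            have hrec := ih (p' ++ a' :: q') hlen3 hchain3 u v hh3 hl3
            refine le_trans hrec ?_
            rw [hold, pathLen_append_cons]
            refine add_le_add_right ?_ _
            exact le_trans le_add_self (le_trans le_add_self (le_refl _))
          · -- a' ≠ c : shortcut edge
            obtain ⟨hadj_ac, hwle⟩ := valley_shortcut H (madj_symm H hma') hmc hla hlc hac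
            have hchain3 : (p' ++ a' :: c :: q').Chain' (MAdj H) := by
              rw [List.Chain', List.isChain_append]
              exact ⟨hcp, List.isChain_cons_cons.2 ⟨hadj_ac, hcq'⟩,
                fun x hx y hy => hjun x hx y (by simpa using hy)⟩
            have hh3 : (p' ++ a' :: c :: q').head? = some u := by
              rw [head?_append_cons_eq p' a' (c :: q') (m :: c :: q'), ← hlsplit]; exact hh
            have hl3 : (p' ++ a' :: c :: q').getLast? = some v := by
              rw [List.getLast?_append_cons, List.getLast?_cons_cons]
              rw [hlsplit, List.getLast?_append_cons, List.getLast?_cons_cons,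
                List.getLast?_cons_cons] at hl
              exact hl
            have hlen3 : (p' ++ a' :: c :: q').length ≤ n := by
              have h1 : (a :: b :: t').length = p'.length + 3 + q'.length := by
                rw [hlsplit]; simp <;> omega
              have h2 : (p' ++ a' :: c :: q').length = p'.length + 2 + q'.length := by
                simp <;> omega
              omega
            have hrec := ih (p' ++ a' :: c :: q') hlen3 hchain3 u v hh3 hl3
            refine le_trans hrec ?_
            rw [hold, pathLen_append_cons, pathLen_cons_cons]
            refine add_le_add_right ?_ _
            calc mw H a' c + pathLen (mw H) (c :: q')
                ≤ (mw H m a' + mw H m c) + pathLen (mw H) (c :: q') := add_le_add_left hwle _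
              _ = mw H a' m + (mw H m c + pathLen (mw H) (c :: q')) := by
                  rw [mw_symm H a' m, add_assoc]
end Main


section Final
variable {h : ℕ} (H : VertexHierarchy V h)

lemma wdist_le_w : ∀ i, 1 ≤ i → i ≤ h → ∀ a b : V, wdist (H.w 1) a b ≤ H.w i a b := by
  intro i h1
  induction i, h1 using Nat.le_induction with
  | base => intro _ a b; exact wdist_le_weight _ a b
  | succ i hi ihp =>
    intro hih a b
    rcases eq_or_ne a b with rfl | hab
    · rw [wdist_self]; exact zero_le
    by_cases hmem : a ∈ VsetOf H.L (i + 1) ∧ b ∈ VsetOf H.L (i + 1)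
    · have key := H.aug (i + 1) (by omega) hih a b hab hmem.1 hmem.2
      simp only [Nat.add_sub_cancel] at key
      rcases le_total (H.w i a b) (⨅ x ∈ H.L i, H.w i a x + H.w i x b) with hc | hc
      · rw [key, min_eq_left hc]; exact ihp (by omega) a b
      · rw [key, min_eq_right hc]
        rcases eq_or_lt_of_le (le_top : (⨅ x ∈ H.L i, H.w i a x + H.w i x b) ≤ ⊤) with htop | hlt
        · rw [htop]; exact le_top
        · rw [iInf_subtype'] at hlt ⊢
          have hne : Nonempty ↥(H.L i) := by
            by_contra hempty
            rw [not_nonempty_iff] at hempty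
            rw [iInf_of_empty] at hlt
            exact lt_irrefl _ hlt
          obtain ⟨⟨x, hx⟩, heq⟩ := enat_exists_eq_iInf
            (fun x : ↥(H.L i) => H.w i a ↑x + H.w i ↑x b)
          rw [← heq]
          calc wdist (H.w 1) a b ≤ wdist (H.w 1) a x + wdist (H.w 1) x b :=
                wdist_triangle _ a x b
          _ ≤ H.w i a x + H.w i x b := add_le_add (ihp (by omega) a x) (ihp (by omega) x b)
    · have : H.w (i + 1) a b = ⊤ := H.supported (i + 1) (by omega) hih a b (by tauto)
      rw [this]; exact le_top

theorem dist_eq_iInf_label' (s t : V) :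
    wdist (H.w 1) s t = ⨅ x ∈ Anc H s ∩ Anc H t, (ancDist H s x + ancDist H t x) := by
  have hsymm : ∀ a b : V, H.w 1 a b = H.w 1 b a := (H.wgraph 1 (le_refl 1) H.h_pos).1
  refine le_antisymm ?_ ?_
  · refine le_iInf₂ fun x hx => ?_
    have hf : ∀ a b : V, AscStep H a b → wdist (H.w 1) a b ≤ H.w (level H a) a b :=
      fun a b _ => wdist_le_w H (level H a) (level_spec H a).1 (level_spec H a).2.1 a b
    have hs : wdist (H.w 1) s x ≤ ancDist H s x := by
      refine le_iInf fun q => ?_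
      obtain ⟨p, hpne, hph, hpl, hpc⟩ := q
      exact wdist_le_pathLen_of_chain hf p s x hph hpl hpc
    have ht : wdist (H.w 1) t x ≤ ancDist H t x := by
      refine le_iInf fun q => ?_
      obtain ⟨p, hpne, hph, hpl, hpc⟩ := q
      exact wdist_le_pathLen_of_chain hf p t x hph hpl hpc
    calc wdist (H.w 1) s t ≤ wdist (H.w 1) s x + wdist (H.w 1) x t := wdist_triangle _ s x t
    _ = wdist (H.w 1) s x + wdist (H.w 1) t x := by rw [wdist_symm hsymm x t]
    _ ≤ ancDist H s x + ancDist H t x := add_le_add hs ht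
  · refine le_iInf fun q => ?_
    obtain ⟨p, hpne, hph, hpl, hpc⟩ := q
    have hmchain : p.Chain' (MAdj H) := hpc.imp fun _ _ hab => (madj_of_adj_one H hab).1
    have h1 := main_down H p.length p (le_refl _) hmchain s t hph hpl
    exact le_trans h1 (pathLen_le (fun a b hab => (madj_of_adj_one H hab).2) p hpc)

end Final


/-- distance is realized through common ancestors using the label
distances `d(·,·)`. -/
theorem dist_eq_iInf_label [Fintype V] {h : ℕ}
    (H : VertexHierarchy V h) (s t : V) :
    wdist (H.w 1) s t =
      ⨅ x ∈ Anc H s ∩ Anc H t, (ancDist H s x + ancDist H t x) := by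
  exact dist_eq_iInf_label' H s t

end ISLabel
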